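/- arXiv:2404.14439 — 3 statements merged into one kernel-verified Lean document; each statement's English description precedes it below -/
import Mathlib

section
/- There is a bijection between the set A_k of standard type B partitions of ⟨n⟩ with 2k+1 blocks and the set Z_k of ordered type B partitions of ⟨n⟩ with 2k+1 blocks satisfying lob_{B'}(π) = 0; explicitly, the bijection swaps blocks S_{2ℓ} and S_{2ℓ-1} for each 1 ≤ ℓ ≤ k. -/
open Finset Polynomial

/-- The ground set ⟨n⟩ = {-n, ..., -1, 0, 1, ..., n}. -/
noncomputable def angleB (n : ℕ) : Finset ℤ := Finset.Icc (-(n : ℤ)) (n : ℤ)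

/-- An ordered type B (signed) partition of ⟨n⟩ with 2k+1 blocks:
pairwise disjoint nonempty blocks covering ⟨n⟩, with 0 ∈ S₀, S₀ closed under
negation, and S_{2i} = -S_{2i-1} for i ≥ 1. -/
def IsOrderedB (n k : ℕ) (S : Fin (2*k+1) → Finset ℤ) : Prop :=
  (∀ i, (S i).Nonempty) ∧
  (∀ i j, i ≠ j → Disjoint (S i) (S j)) ∧
  (Finset.univ.biUnion S = angleB n) ∧
  ((0 : ℤ) ∈ S 0) ∧
  (∀ x ∈ S 0, -x ∈ S 0) ∧
  (∀ i : ℕ, 1 ≤ i → ∀ h : 2*i < 2*k+1,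
    S ⟨2*i, h⟩ = (S ⟨2*i-1, by omega⟩).image (fun x => -x))

/-- m_j = min |S_j| (0 if the block is empty). -/
def mB {m : ℕ} (S : Fin m → Finset ℤ) (j : Fin m) : ℤ :=
  WithTop.untopD 0 (((S j).image (fun x => |x|)).min)

/-- M_j = max |S_j| (0 if the block is empty). -/
def MB {m : ℕ} (S : Fin m → Finset ℤ) (j : Fin m) : ℤ :=
  WithBot.unbotD 0 (((S j).image (fun x => |x|)).max)

/-- A standard type B partition: ordered, with m_{2i} ∈ S_{2i} for i ≥ 1 and
0 = m₀ < m₂ < m₄ < ... < m_{2k}. -/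
def IsStandardB (n k : ℕ) (S : Fin (2*k+1) → Finset ℤ) : Prop :=
  IsOrderedB n k S ∧
  (∀ i : ℕ, 1 ≤ i → ∀ h : 2*i < 2*k+1, mB S ⟨2*i, h⟩ ∈ S ⟨2*i, h⟩) ∧
  (∀ i : ℕ, ∀ h : 2*(i+1) < 2*k+1, mB S ⟨2*i, by omega⟩ < mB S ⟨2*(i+1), h⟩)

/-- inv ρ: number of pairs (s, S_j) with s ∈ S_i for some i < j and s ≥ m_j. -/
noncomputable def invB {m : ℕ} (S : Fin m → Finset ℤ) : ℕ :=
  {p : ℤ × Fin m | (∃ i < p.2, p.1 ∈ S i) ∧ mB S p.2 ≤ p.1}.ncard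

/-- ros_B = inv. -/
noncomputable def rosB {m : ℕ} (S : Fin m → Finset ℤ) : ℕ := invB S

/-- los_{B'}: pairs (s, S_j) with s ∈ S_i for some i > j and s ≥ m_j. -/
noncomputable def losB' {m : ℕ} (S : Fin m → Finset ℤ) : ℕ :=
  {p : ℤ × Fin m | (∃ i, p.2 < i ∧ p.1 ∈ S i) ∧ mB S p.2 ≤ p.1}.ncard

/-- lob_{B'}: pairs (s, S_j) with s ∈ S_i for some i > j and 0 < s ≤ m_j. -/
noncomputable def lobB' {m : ℕ} (S : Fin m → Finset ℤ) : ℕ :=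
  {p : ℤ × Fin m | (∃ i, p.2 < i ∧ p.1 ∈ S i) ∧ 0 < p.1 ∧ p.1 ≤ mB S p.2}.ncard

/-- rcb_B: pairs (s, S_j) with s ∈ S_i for some i < j and 0 < s ≤ M_j. -/
noncomputable def rcbB {m : ℕ} (S : Fin m → Finset ℤ) : ℕ :=
  {p : ℤ × Fin m | (∃ i < p.2, p.1 ∈ S i) ∧ 0 < p.1 ∧ p.1 ≤ MB S p.2}.ncard

/-- rob_B: pairs (s, S_j) with s ∈ S_i for some i < j and 0 < s ≤ m_j. -/
noncomputable def robB {m : ℕ} (S : Fin m → Finset ℤ) : ℕ :=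
  {p : ℤ × Fin m | (∃ i < p.2, p.1 ∈ S i) ∧ 0 < p.1 ∧ p.1 ≤ mB S p.2}.ncard

/-- rcs_B: pairs (s, S_j) with s ∈ S_i for some i < j and s ≥ M_j. -/
noncomputable def rcsB {m : ℕ} (S : Fin m → Finset ℤ) : ℕ :=
  {p : ℤ × Fin m | (∃ i < p.2, p.1 ∈ S i) ∧ MB S p.2 ≤ p.1}.ncard

/-- Type B Stirling numbers of the second kind. -/
def StirB : ℕ → ℕ → ℕ
  | 0, 0 => 1
  | 0, _+1 => 0
  | n+1, 0 => StirB n 0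
  | n+1, k+1 => StirB n k + (2*(k+1)+1) * StirB n (k+1)

/-- [m] = 1 + q + ... + q^{m-1}. -/
noncomputable def qb (m : ℕ) : Polynomial ℤ := ∑ i ∈ Finset.range m, (Polynomial.X : Polynomial ℤ) ^ i

/-- Type B q-Stirling numbers of the second kind. -/
noncomputable def qStirB : ℕ → ℕ → Polynomial ℤ
  | 0, 0 => 1
  | 0, _+1 => 0
  | n+1, 0 => qStirB n 0
  | n+1, k+1 => qStirB n k + qb (2*(k+1)+1) * qStirB n (k+1)

/-- [2k]!! = [2k][2k-2]⋯[2]. -/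
noncomputable def qdf : ℕ → Polynomial ℤ
  | 0 => 1
  | k+1 => qb (2*(k+1)) * qdf k

/-- The complement map on ⟨n⟩: i ↦ n+1-i for i > 0, -i ↦ -(n+1-i), 0 ↦ 0. -/
def complB (n : ℕ) (x : ℤ) : ℤ :=
  if 0 < x then (n : ℤ) + 1 - x else if x < 0 then -((n : ℤ) + 1) - x else 0

/-- Complement of a partition, blockwise. -/
def complP (n : ℕ) {m : ℕ} (S : Fin m → Finset ℤ) : Fin m → Finset ℤ :=
  fun j => (S j).image (complB n)

/-- The index of the block paired with block i: 0 ↦ 0, 2ℓ-1 ↦ 2ℓ, 2ℓ ↦ 2ℓ-1. -/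
def pairIdx (k : ℕ) (i : Fin (2*k+1)) : Fin (2*k+1) :=
  if i.val = 0 then i
  else if h2 : i.val % 2 = 1 then ⟨i.val + 1, by omega⟩ else ⟨i.val - 1, by omega⟩

section Aux

lemma mB_le {m : ℕ} {S : Fin m → Finset ℤ} {j : Fin m} {x : ℤ} (hx : x ∈ S j) :
    mB S j ≤ |x| := by
  have h : |x| ∈ (S j).image (fun x => |x|) := Finset.mem_image_of_mem _ hx
  have h2 := Finset.min_le h
  unfold mB
  rcases hm : ((S j).image (fun x => |x|)).min with _ | c
  · rw [hm] at h2; exact absurd h2 (by simp [WithTop.none_eq_top])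
  · rw [hm] at h2
    rw [WithTop.some_eq_coe, WithTop.coe_le_coe] at h2
    exact h2

lemma mB_mem {m : ℕ} {S : Fin m → Finset ℤ} {j : Fin m} (h : (S j).Nonempty) :
    ∃ x ∈ S j, |x| = mB S j := by
  have him : ((S j).image (fun x => |x|)).Nonempty := h.image _
  have hmin := Finset.min'_mem _ him
  rw [Finset.mem_image] at hmin
  obtain ⟨x, hx, hxe⟩ := hmin
  refine ⟨x, hx, ?_⟩
  rw [hxe]
  unfold mB
  rw [← Finset.coe_min' him]
  rfl

lemma mB_nonneg {m : ℕ} {S : Fin m → Finset ℤ} {j : Fin m} : 0 ≤ mB S j := by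
  rcases Finset.eq_empty_or_nonempty (S j) with h | h
  · unfold mB; rw [h]; simp
  · obtain ⟨x, _, hx⟩ := mB_mem h
    rw [← hx]; positivity

lemma pairIdx_val (k : ℕ) (i : Fin (2*k+1)) : (pairIdx k i).val =
    if i.val = 0 then 0 else if i.val % 2 = 1 then i.val + 1 else i.val - 1 := by
  unfold pairIdx
  split_ifs <;> simp_all

lemma pairIdx_invol (k : ℕ) (i : Fin (2*k+1)) : pairIdx k (pairIdx k i) = i := by
  apply Fin.ext
  have hl := i.isLt
  simp only [pairIdx_val]
  split_ifs <;> first | omega | tauto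

lemma pairIdx_zero (k : ℕ) : pairIdx k 0 = 0 := by
  apply Fin.ext
  rw [pairIdx_val]
  simp

lemma pairIdx_even (k : ℕ) (i : ℕ) (h1 : 1 ≤ i) (h : 2*i < 2*k+1) :
    pairIdx k ⟨2*i, h⟩ = ⟨2*i-1, by omega⟩ := by
  apply Fin.ext
  rw [pairIdx_val]
  simp only
  split_ifs <;> omega

lemma pairIdx_odd (k : ℕ) (i : ℕ) (h1 : 1 ≤ i) (h : 2*i < 2*k+1) :
    pairIdx k ⟨2*i-1, by omega⟩ = ⟨2*i, h⟩ := by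
  apply Fin.ext
  rw [pairIdx_val]
  simp only
  split_ifs <;> omega

variable {n k : ℕ} {S T : Fin (2*k+1) → Finset ℤ}

lemma mB_zero (hS : IsOrderedB n k S) : mB S 0 = 0 := by
  have h1 : mB S 0 ≤ |(0:ℤ)| := mB_le hS.2.2.2.1
  simp at h1
  exact le_antisymm h1 mB_nonneg

lemma mB_pos (hS : IsOrderedB n k S) {j : Fin (2*k+1)} (hj : j ≠ 0) : 0 < mB S j := by
  obtain ⟨x, hx, hxm⟩ := mB_mem (hS.1 j)
  rcases lt_or_eq_of_le (mB_nonneg (S := S) (j := j)) with h | h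
  · exact h
  · exfalso
    have : |x| = 0 := by omega
    have hx0 : x = 0 := abs_eq_zero.mp this
    subst hx0
    have hd := hS.2.1 j 0 hj
    exact (Finset.disjoint_left.mp hd hx) hS.2.2.2.1

lemma mB_pair (hS : IsOrderedB n k S) (i : ℕ) (h1 : 1 ≤ i) (h : 2*i < 2*k+1) :
    mB S ⟨2*i, h⟩ = mB S ⟨2*i-1, by omega⟩ := by
  obtain ⟨-, -, -, -, -, hpair⟩ := hS
  unfold mB
  rw [hpair i h1 h, Finset.image_image,
    show ((fun x : ℤ => |x|) ∘ fun x : ℤ => -x) = fun x : ℤ => |x| from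
      funext fun x => by simp]

lemma mB_pairIdx (hS : IsOrderedB n k S) (j : Fin (2*k+1)) :
    mB S (pairIdx k j) = mB S j := by
  rcases Nat.eq_zero_or_pos j.val with h0 | h0
  · have : j = 0 := Fin.ext (by simpa using h0)
    rw [this, pairIdx_zero]
  · rcases Nat.even_or_odd j.val with ⟨a, ha⟩ | ⟨a, ha⟩
    · -- j.val = 2a, a ≥ 1
      have ha1 : 1 ≤ a := by omega
      have hlt : 2*a < 2*k+1 := by have := j.isLt; omega
      have hj : j = ⟨2*a, hlt⟩ := Fin.ext (by simp; omega)
      rw [hj, pairIdx_even k a ha1 hlt, ← mB_pair hS a ha1 hlt]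
    · -- j.val = 2a+1 = 2(a+1)-1
      have hlt : 2*(a+1) < 2*k+1 := by have := j.isLt; omega
      have hj : j = ⟨2*(a+1)-1, by omega⟩ := Fin.ext (by simp; omega)
      rw [hj, pairIdx_odd k (a+1) (by omega) hlt, mB_pair hS (a+1) (by omega) hlt]

lemma ordered_swap (hS : IsOrderedB n k S) :
    IsOrderedB n k (fun t => S (pairIdx k t)) := by
  obtain ⟨h1, h2, h3, h4, h5, h6⟩ := hS
  refine ⟨fun i => h1 _, ?_, ?_, ?_, ?_, ?_⟩
  · intro i j hij
    exact h2 _ _ (fun he => hij (by rw [← pairIdx_invol k i, he, pairIdx_invol]))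
  · rw [← h3]
    ext x
    simp only [Finset.mem_biUnion, Finset.mem_univ, true_and]
    constructor
    · rintro ⟨i, hi⟩; exact ⟨pairIdx k i, hi⟩
    · rintro ⟨i, hi⟩; exact ⟨pairIdx k i, by rw [pairIdx_invol]; exact hi⟩
  · simpa [pairIdx_zero] using h4
  · simpa [pairIdx_zero] using h5
  · intro i hi h
    simp only
    rw [pairIdx_even k i hi h, pairIdx_odd k i hi h, h6 i hi h,
      Finset.image_image]
    have : ((fun x : ℤ => -x) ∘ fun x : ℤ => -x) = id := by funext x; simp
    rw [this, Finset.image_id]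

/-- strict monotonicity of even-index minima for a standard partition -/
lemma mB_mono (hS : IsStandardB n k S) : ∀ b a : ℕ, (ha : a < b) → (hb : 2*b < 2*k+1) →
    mB S ⟨2*a, by omega⟩ < mB S ⟨2*b, hb⟩ := by
  intro b
  induction b with
  | zero => intro a ha _; exact absurd ha (Nat.not_lt_zero a)
  | succ b ih =>
    intro a ha hb
    rcases Nat.lt_or_ge a b with h | h
    · exact lt_trans (ih a h (by omega)) (hS.2.2 b hb)
    · have : a = b := by omega
      subst this
      exact hS.2.2 a hb


lemma ncard_zero_of_forall {α : Type*} {s : Set α} (h : ∀ x, x ∉ s) : s.ncard = 0 := by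
  have : s = ∅ := Set.eq_empty_iff_forall_notMem.mpr h
  simp [this]

lemma lob_swap_zero (hS : IsStandardB n k S) :
    lobB' (fun t => S (pairIdx k t)) = 0 := by
  have hord := hS.1
  unfold lobB'
  apply ncard_zero_of_forall
  rintro ⟨s, j⟩ ⟨⟨i, hji, hsi⟩, hs, hsm⟩
  simp only [Set.mem_setOf_eq] at hsi hsm ⊢
  have hmT : mB (fun t => S (pairIdx k t)) j = mB S j := by
    have h1 : mB (fun t => S (pairIdx k t)) j = mB S (pairIdx k j) := rfl
    rw [h1, mB_pairIdx hord]
  rw [hmT] at hsm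
  have hmi : mB S i ≤ s := by
    have h1 : mB S (pairIdx k i) ≤ |s| := mB_le hsi
    rw [mB_pairIdx hord] at h1
    rwa [abs_of_pos hs] at h1
  rcases Nat.eq_zero_or_pos j.val with h0 | h0
  · have hj : j = 0 := Fin.ext (by simpa using h0)
    rw [hj, mB_zero hord] at hsm
    omega
  · have hjlt := j.isLt
    have hilt := i.isLt
    have hji' : j.val < i.val := hji
    set a := (j.val + 1) / 2 with ha
    have ha1 : 1 ≤ a := by omega
    have halt : 2*a < 2*k+1 := by omega
    have hmja : mB S j = mB S ⟨2*a, halt⟩ := by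
      rcases Nat.even_or_odd j.val with ⟨c, hc⟩ | ⟨c, hc⟩
      · have hj : j = ⟨2*a, halt⟩ := Fin.ext (by simp only; omega)
        rw [hj]
      · have hj : j = ⟨2*a - 1, by omega⟩ := Fin.ext (by simp only; omega)
        rw [hj, ← mB_pair hord a ha1 halt]
    rcases Nat.lt_or_ge (2*a) i.val with hcase | hcase
    · set b := (i.val + 1) / 2 with hb
      have hblt : 2*b < 2*k+1 := by omega
      have hmib : mB S i = mB S ⟨2*b, hblt⟩ := by
        rcases Nat.even_or_odd i.val with ⟨c, hc⟩ | ⟨c, hc⟩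
        · have hi : i = ⟨2*b, hblt⟩ := Fin.ext (by simp only; omega)
          rw [hi]
        · have hi : i = ⟨2*b - 1, by omega⟩ := Fin.ext (by simp only; omega)
          rw [hi, ← mB_pair hord b (by omega) hblt]
      have hab : a < b := by omega
      have hmono := mB_mono hS b a hab hblt
      rw [hmja] at hsm; rw [hmib] at hmi
      omega
    · have hiv : i.val = 2*a := by omega
      have hie : i = ⟨2*a, halt⟩ := Fin.ext hiv
      have hmem := hS.2.1 a ha1 halt
      rw [hie] at hmi
      have hseq : s = mB S ⟨2*a, halt⟩ := by rw [hmja] at hsm; omega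
      rw [hie, pairIdx_even k a ha1 halt] at hsi
      have hd := hord.2.1 ⟨2*a, halt⟩ ⟨2*a-1, by omega⟩
        (Fin.ne_of_val_ne (by simp only; omega))
      exact (Finset.disjoint_left.mp hd (hseq ▸ hmem)) hsi

lemma lob_not_mem (h0 : lobB' T = 0) {s : ℤ} {j i : Fin (2*k+1)}
    (hT : IsOrderedB n k T) (hji : j < i) (hsi : s ∈ T i) (hs : 0 < s)
    (hsm : s ≤ mB T j) : False := by
  have hfin : {p : ℤ × Fin (2*k+1) |
      (∃ i, p.2 < i ∧ p.1 ∈ T i) ∧ 0 < p.1 ∧ p.1 ≤ mB T p.2}.Finite := by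
    apply Set.Finite.subset (Set.Finite.prod (angleB n).finite_toSet Set.finite_univ)
    rintro ⟨x, y⟩ ⟨⟨i', _, hxi⟩, -⟩
    refine ⟨?_, trivial⟩
    have h3 := hT.2.2.1
    simp only [Finset.mem_coe]
    rw [← h3]
    exact Finset.mem_biUnion.mpr ⟨i', Finset.mem_univ _, hxi⟩
  unfold lobB' at h0
  rw [Set.ncard_eq_zero hfin] at h0
  have hmem : ((s, j) : ℤ × Fin (2*k+1)) ∈ {p : ℤ × Fin (2*k+1) |
      (∃ i, p.2 < i ∧ p.1 ∈ T i) ∧ 0 < p.1 ∧ p.1 ≤ mB T p.2} :=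
    ⟨⟨i, hji, hsi⟩, hs, hsm⟩
  rw [h0] at hmem
  exact hmem

lemma min_mem_odd (hT : IsOrderedB n k T) (h0 : lobB' T = 0) (i : ℕ)
    (hi : 1 ≤ i) (h : 2*i < 2*k+1) :
    mB T ⟨2*i, h⟩ ∈ T ⟨2*i-1, by omega⟩ := by
  have hne : (⟨2*i, h⟩ : Fin (2*k+1)) ≠ 0 := Fin.ne_of_val_ne (show 2*i ≠ 0 by omega)
  have hpos := mB_pos hT hne
  obtain ⟨x, hx, hxm⟩ := mB_mem (hT.1 ⟨2*i, h⟩)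
  rcases abs_cases x with ⟨he, -⟩ | ⟨he, -⟩
  · exfalso
    rw [he] at hxm
    subst hxm
    refine lob_not_mem h0 hT (j := ⟨2*i-1, by omega⟩) (i := ⟨2*i, h⟩)
      (Fin.mk_lt_mk.mpr (by omega)) hx hpos ?_
    rw [← mB_pair hT i hi h]
  · rw [he] at hxm
    have hx' : x = -mB T ⟨2*i, h⟩ := by omega
    have hpair := hT.2.2.2.2.2 i hi h
    rw [hpair] at hx
    obtain ⟨y, hy, hye⟩ := Finset.mem_image.mp hx
    have : y = mB T ⟨2*i, h⟩ := by omega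
    rwa [← this]

lemma standard_swap (hT : IsOrderedB n k T) (h0 : lobB' T = 0) :
    IsStandardB n k (fun t => T (pairIdx k t)) := by
  refine ⟨ordered_swap hT, ?_, ?_⟩
  · intro i hi h
    simp only
    have hm : mB (fun t => T (pairIdx k t)) ⟨2*i, h⟩ = mB T ⟨2*i, h⟩ := by
      have h1 : mB (fun t => T (pairIdx k t)) ⟨2*i, h⟩
          = mB T (pairIdx k ⟨2*i, h⟩) := rfl
      rw [h1, mB_pairIdx hT]
    rw [hm, pairIdx_even k i hi h]
    exact min_mem_odd hT h0 i hi h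
  · intro i h
    have hm : ∀ (a : ℕ) (ha : 2*a < 2*k+1),
        mB (fun t => T (pairIdx k t)) ⟨2*a, ha⟩ = mB T ⟨2*a, ha⟩ := by
      intro a ha
      have h1 : mB (fun t => T (pairIdx k t)) ⟨2*a, ha⟩
          = mB T (pairIdx k ⟨2*a, ha⟩) := rfl
      rw [h1, mB_pairIdx hT]
    rw [hm i (by omega), hm (i+1) h]
    rcases Nat.eq_zero_or_pos i with h0' | h0'
    · subst h0'
      have hz : (⟨2*0, by omega⟩ : Fin (2*k+1)) = 0 := Fin.ext (show 2*0 = 0 by omega)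
      rw [hz, mB_zero hT]
      exact mB_pos hT (Fin.ne_of_val_ne (show 2*(0+1) ≠ 0 by omega))
    · by_contra hab
      push_neg at hab
      have hb := min_mem_odd hT h0 (i+1) (by omega) h
      have hbpos := mB_pos hT (j := ⟨2*(i+1), h⟩)
        (Fin.ne_of_val_ne (show 2*(i+1) ≠ 0 by omega))
      exact lob_not_mem h0 hT (j := ⟨2*i, by omega⟩) (i := ⟨2*(i+1)-1, by omega⟩)
        (Fin.mk_lt_mk.mpr (by omega)) hb hbpos hab

end Aux

/-- swapping blocks S_{2ℓ} and S_{2ℓ-1} is a bijection from standard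
type B partitions onto ordered type B partitions with lob_{B'} = 0. -/
theorem stmt7 (n k : ℕ) :
    Set.BijOn (fun (S : Fin (2*k+1) → Finset ℤ) => fun t => S (pairIdx k t))
      {S | IsStandardB n k S}
      {S | IsOrderedB n k S ∧ lobB' S = 0} := by
  refine ⟨?_, ?_, ?_⟩
  · intro S hS
    exact ⟨ordered_swap hS.1, lob_swap_zero hS⟩
  · intro S1 _ S2 _ heq
    funext t
    have h := congrFun heq (pairIdx k t)
    simpa [pairIdx_invol] using h
  · rintro T ⟨hT, h0⟩
    refine ⟨fun t => T (pairIdx k t), standard_swap hT h0, ?_⟩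
    funext t
    simp only
    rw [pairIdx_invol]
end

section
/- The statistics ros_B and rcb_B are equidistributed over ordered type B partitions of ⟨n⟩ with 2k+1 blocks: the complement map π ↦ π^c (replacing each positive i by n+1-i, each -i by -(n+1-i), and fixing 0) is a bijection on ordered type B partitions satisfying rcb_B(π^c) = ros_B(π). -/
open Finset Polynomial

lemma max_unbot'_eq {T : Finset ℤ} {b : ℤ} (hb : b ∈ T) (hub : ∀ x ∈ T, x ≤ b) :
    WithBot.unbotD 0 T.max = b := by
  have h : T.max = (b : WithBot ℤ) :=
    le_antisymm (Finset.max_le (fun x hx => WithBot.coe_le_coe.2 (hub x hx))) (Finset.le_max hb)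
  rw [h]; rfl

lemma min_untop'_eq {T : Finset ℤ} {b : ℤ} (hb : b ∈ T) (hlb : ∀ x ∈ T, b ≤ x) :
    WithTop.untopD 0 T.min = b := by
  have h : T.min = (b : WithTop ℤ) :=
    le_antisymm (Finset.min_le hb) (Finset.le_min (fun x hx => WithTop.coe_le_coe.2 (hlb x hx)))
  rw [h]; rfl

lemma complB_mem (n : ℕ) {x : ℤ} (hx : x ∈ angleB n) : complB n x ∈ angleB n := by
  simp only [angleB, Finset.mem_Icc] at *
  simp only [complB]; split_ifs <;> omega

lemma complB_invol (n : ℕ) {x : ℤ} (hx : x ∈ angleB n) : complB n (complB n x) = x := by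
  simp only [angleB, Finset.mem_Icc] at hx
  simp only [complB]; split_ifs <;> omega

lemma complB_neg (n : ℕ) (x : ℤ) : complB n (-x) = -complB n x := by
  simp only [complB]; split_ifs <;> omega

lemma complB_pos {n : ℕ} {x : ℤ} (hx : x ∈ angleB n) : 0 < complB n x ↔ 0 < x := by
  simp only [angleB, Finset.mem_Icc] at hx
  simp only [complB]; split_ifs <;> omega

lemma complB_abs {n : ℕ} {x : ℤ} (hx : x ∈ angleB n) (hx0 : x ≠ 0) :
    |complB n x| = (n : ℤ) + 1 - |x| := by
  simp only [angleB, Finset.mem_Icc] at hx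
  simp only [complB, Int.abs_eq_natAbs]; split_ifs <;> omega

/-- the complement map is a bijection on ordered type B partitions
with rcb_B(π^c) = ros_B(π). -/
theorem stmt9 (n k : ℕ) (S : Fin (2*k+1) → Finset ℤ) (hS : IsOrderedB n k S) :
    IsOrderedB n k (complP n S) ∧ complP n (complP n S) = S ∧
      rcbB (complP n S) = rosB S := by
  obtain ⟨hne, hdisj, hcov, h0, hnegcl, hpair⟩ := hS
  have hsub : ∀ i, S i ⊆ angleB n := by
    intro i x hx
    rw [← hcov]
    exact Finset.mem_biUnion.2 ⟨i, Finset.mem_univ i, hx⟩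
  -- the minimum is attained
  have hmB : ∀ j : Fin (2*k+1), ∃ x₀ ∈ S j, |x₀| = mB S j ∧ ∀ x ∈ S j, mB S j ≤ |x| := by
    intro j
    have hT : ((S j).image (fun x => |x|)).Nonempty := (hne j).image _
    obtain ⟨x₀, hx₀, hx₀'⟩ := Finset.mem_image.1 (Finset.min'_mem _ hT)
    have hval : mB S j = ((S j).image (fun x => |x|)).min' hT :=
      min_untop'_eq (Finset.min'_mem _ hT) (fun x hx => Finset.min'_le _ x hx)
    refine ⟨x₀, hx₀, by rw [hval, hx₀'], fun x hx => ?_⟩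
    rw [hval]
    exact Finset.min'_le _ _ (Finset.mem_image.2 ⟨x, hx, rfl⟩)
  have hzero : ∀ j : Fin (2*k+1), j ≠ 0 → (0:ℤ) ∉ S j := by
    intro j hj hmem
    exact Finset.disjoint_left.1 (hdisj 0 j (Ne.symm hj)) h0 hmem
  have hmBpos : ∀ j : Fin (2*k+1), j ≠ 0 → 1 ≤ mB S j ∧ mB S j ≤ (n:ℤ) := by
    intro j hj
    obtain ⟨x₀, hx₀, heq, -⟩ := hmB j
    have hx0 : x₀ ≠ 0 := fun h => hzero j hj (h ▸ hx₀)
    have := hsub j hx₀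
    simp only [angleB, Finset.mem_Icc] at this
    constructor <;> rw [← heq, Int.abs_eq_natAbs] <;> omega
  have hMBc : ∀ j : Fin (2*k+1), j ≠ 0 →
      MB (complP n S) j = (n:ℤ) + 1 - mB S j := by
    intro j hj
    obtain ⟨x₀, hx₀, heq, hlb⟩ := hmB j
    have hx0 : x₀ ≠ 0 := fun h => hzero j hj (h ▸ hx₀)
    apply max_unbot'_eq
    · refine Finset.mem_image.2 ⟨complB n x₀, Finset.mem_image.2 ⟨x₀, hx₀, rfl⟩, ?_⟩
      rw [complB_abs (hsub j hx₀) hx0, heq]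
    · intro y hy
      obtain ⟨z, hz, rfl⟩ := Finset.mem_image.1 hy
      obtain ⟨x, hx, rfl⟩ := Finset.mem_image.1 hz
      have hx0' : x ≠ 0 := fun h => hzero j hj (h ▸ hx)
      rw [complB_abs (hsub j hx) hx0']
      have := hlb x hx
      omega
  refine ⟨⟨fun i => (hne i).image _, ?_, ?_, ?_, ?_, ?_⟩, ?_, ?_⟩
  · -- disjointness
    intro i j hij
    rw [Finset.disjoint_left]
    intro a hai haj
    obtain ⟨x, hx, rfl⟩ := Finset.mem_image.1 hai
    obtain ⟨y, hy, hxy⟩ := Finset.mem_image.1 haj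
    have : y = x := by
      have := congrArg (complB n) hxy
      rwa [complB_invol n (hsub j hy), complB_invol n (hsub i hx)] at this
    subst this
    exact Finset.disjoint_left.1 (hdisj i j hij) hx hy
  · -- cover
    ext y
    simp only [Finset.mem_biUnion, Finset.mem_univ, true_and, complP, Finset.mem_image]
    constructor
    · rintro ⟨i, x, hx, rfl⟩
      exact complB_mem n (hsub i hx)
    · intro hy
      have h1 : complB n y ∈ angleB n := complB_mem n hy
      rw [← hcov] at h1
      simp only [Finset.mem_biUnion, Finset.mem_univ, true_and] at h1
      obtain ⟨i, hi⟩ := h1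
      exact ⟨i, complB n y, hi, complB_invol n hy⟩
  · -- 0 ∈ block 0
    exact Finset.mem_image.2 ⟨0, h0, by simp [complB]⟩
  · -- negation closure
    intro x hx
    obtain ⟨y, hy, rfl⟩ := Finset.mem_image.1 hx
    exact Finset.mem_image.2 ⟨-y, hnegcl y hy, complB_neg n y⟩
  · -- pairing
    intro i hi h
    simp only [complP]
    rw [hpair i hi h, Finset.image_image, Finset.image_image]
    exact Finset.image_congr (fun x _ => complB_neg n x)
  · -- involution
    funext j
    ext a
    simp only [complP, Finset.mem_image]
    constructor
    · rintro ⟨x, ⟨y, hy, rfl⟩, rfl⟩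
      rwa [complB_invol n (hsub j hy)]
    · intro ha
      exact ⟨complB n a, ⟨a, ha, rfl⟩, complB_invol n (hsub j ha)⟩
  · -- the statistic
    unfold rcbB rosB invB
    have hne0 : ∀ {i j : Fin (2*k+1)}, i < j → j ≠ 0 := by
      intro i j hij h
      subst h
      exact absurd hij (by simp [Fin.lt_def])
    have himage : {p : ℤ × Fin (2*k+1) |
          (∃ i < p.2, p.1 ∈ complP n S i) ∧ 0 < p.1 ∧ p.1 ≤ MB (complP n S) p.2}
        = (fun p : ℤ × Fin (2*k+1) => (complB n p.1, p.2)) ''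
          {p | (∃ i < p.2, p.1 ∈ S i) ∧ mB S p.2 ≤ p.1} := by
      ext ⟨t, j⟩
      simp only [Set.mem_setOf_eq, Set.mem_image, Prod.mk.injEq, Prod.exists]
      constructor
      · rintro ⟨⟨i, hij, ht⟩, htpos, htle⟩
        obtain ⟨s, hs, rfl⟩ := Finset.mem_image.1 ht
        have hj0 : j ≠ 0 := hne0 hij
        have hsmem := hsub i hs
        have hspos : 0 < s := (complB_pos hsmem).1 htpos
        have hcval : complB n s = (n:ℤ) + 1 - s := by
          simp only [complB, if_pos hspos]
        rw [hMBc j hj0, hcval] at htle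
        exact ⟨s, j, ⟨⟨i, hij, hs⟩, by omega⟩, rfl, rfl⟩
      · rintro ⟨s, j', ⟨⟨i, hij, hs⟩, hms⟩, rfl, rfl⟩
        have hj0 : j' ≠ 0 := hne0 hij
        have hsmem := hsub i hs
        have hsb : -(n:ℤ) ≤ s ∧ s ≤ n := by
          simpa [angleB, Finset.mem_Icc] using hsmem
        have h1 := (hmBpos j' hj0).1
        have hspos : 0 < s := by omega
        have hcval : complB n s = (n:ℤ) + 1 - s := by
          simp only [complB, if_pos hspos]
        refine ⟨⟨i, hij, Finset.mem_image.2 ⟨s, hs, rfl⟩⟩, ?_, ?_⟩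
        · rw [hcval]; omega
        · rw [hMBc j' hj0, hcval]; omega
    rw [himage]
    apply Set.ncard_image_of_injOn
    rintro ⟨s, j⟩ ⟨⟨i, hi, hsi⟩, -⟩ ⟨s', j'⟩ ⟨⟨i', hi', hsi'⟩, -⟩ heq
    simp only [Prod.mk.injEq] at heq
    obtain ⟨h1, h2⟩ := heq
    have := congrArg (complB n) h1
    rw [complB_invol n (hsub i hsi), complB_invol n (hsub i' hsi')] at this
    exact Prod.ext_iff.2 ⟨this, h2⟩
end

section
/- For n ≥ 1, if a standard type B partition ρ' of ⟨n-1⟩ with 2k+1 blocks is extended by inserting n into block S_i and -n into its paired block (into S_0 if i = 0), giving a partition ρ of ⟨n⟩, then los_{B'}(ρ) = los_{B'}(ρ') + i for each choice 0 ≤ i ≤ 2k, and each such ρ is a standard type B partition of ⟨n⟩ with 2k+1 blocks. -/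
open Finset Polynomial

lemma mB_union_big {n : ℕ} {A E : Finset ℤ} (hA : A.Nonempty) (hbd : ∀ x ∈ A, |x| ≤ (n:ℤ))
    (hE : ∀ x ∈ E, |x| = (n:ℤ)+1) :
    WithTop.untopD 0 (((A ∪ E).image (fun x => |x|)).min) = WithTop.untopD 0 ((A.image (fun x => |x|)).min) := by
  rw [Finset.image_union, Finset.min_union]
  congr 1
  rw [inf_eq_left]
  obtain ⟨a0, ha0⟩ := hA
  apply Finset.le_min
  intro b hb
  simp only [Finset.mem_image] at hb
  obtain ⟨x, hx, rfl⟩ := hb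
  calc (A.image (fun x => |x|)).min ≤ (((|a0| : ℤ) : WithTop ℤ)) :=
        Finset.min_le (Finset.mem_image_of_mem _ ha0)
    _ ≤ (((|x| : ℤ) : WithTop ℤ)) := by
        rw [WithTop.coe_le_coe, hE x hx]
        have := hbd a0 ha0; omega

lemma mB_bounds {n : ℕ} {m : ℕ} {S : Fin m → Finset ℤ} {j : Fin m}
    (hA : (S j).Nonempty) (hbd : ∀ x ∈ S j, |x| ≤ (n:ℤ)) :
    0 ≤ mB S j ∧ mB S j ≤ (n:ℤ) := by
  have hne : ((S j).image (fun x => |x|)).Nonempty := hA.image _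
  have hmem := Finset.min'_mem _ hne
  have hc := Finset.coe_min' hne
  simp only [Finset.mem_image] at hmem
  obtain ⟨x, hx, hxe⟩ := hmem
  unfold mB
  rw [← hc, WithTop.untopD_coe, ← hxe]
  exact ⟨abs_nonneg x, hbd x hx⟩

lemma stmt18_pair_even {k : ℕ} (i : Fin (2*k+1)) (ℓ : ℕ) (hℓ : 1 ≤ ℓ) (h : 2*ℓ < 2*k+1) :
    pairIdx k i = ⟨2*ℓ, h⟩ ↔ i = ⟨2*ℓ-1, by omega⟩ := by
  unfold pairIdx
  split_ifs with h1 h2 <;> rw [Fin.ext_iff, Fin.ext_iff] <;> (try simp only [Fin.val_mk]) <;> omega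

lemma stmt18_pair_odd {k : ℕ} (i : Fin (2*k+1)) (ℓ : ℕ) (hℓ : 1 ≤ ℓ) (h : 2*ℓ < 2*k+1) :
    pairIdx k i = ⟨2*ℓ-1, by omega⟩ ↔ i = ⟨2*ℓ, h⟩ := by
  unfold pairIdx
  split_ifs with h1 h2 <;> rw [Fin.ext_iff, Fin.ext_iff] <;> (try simp only [Fin.val_mk]) <;> omega

lemma stmt18_pair_val_ne_zero {k : ℕ} (i : Fin (2*k+1)) (hi : i.val ≠ 0) :
    (pairIdx k i).val ≠ 0 := by
  unfold pairIdx
  split_ifs with h1 h2 <;> (try simp only [Fin.val_mk]) <;> omega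

/-- inserting n+1 into block S_i and -(n+1) into its paired block
(both into S₀ if i = 0) of a standard type B partition of ⟨n⟩ yields a standard
type B partition of ⟨n+1⟩ with los_{B'} increased by exactly i. -/
theorem stmt18 (n k : ℕ) (S : Fin (2*k+1) → Finset ℤ)
    (hS : IsStandardB n k S) (i : Fin (2*k+1)) :
    IsStandardB (n+1) k
      (fun t => S t ∪ (if t = i then {((n : ℤ)+1)} else ∅)
        ∪ (if t = pairIdx k i then {-((n : ℤ)+1)} else ∅)) ∧
    losB' (fun t => S t ∪ (if t = i then {((n : ℤ)+1)} else ∅)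
        ∪ (if t = pairIdx k i then {-((n : ℤ)+1)} else ∅)) = losB' S + i.val := by
  obtain ⟨⟨hne, hdisj, hcov, h0, hneg, hpair⟩, hmem2, hmono⟩ := hS
  set T : Fin (2*k+1) → Finset ℤ := fun t => S t ∪ (if t = i then {((n : ℤ)+1)} else ∅)
        ∪ (if t = pairIdx k i then {-((n : ℤ)+1)} else ∅) with hT
  have hsub : ∀ j, S j ⊆ angleB n := by
    intro j x hx
    rw [← hcov]
    exact Finset.mem_biUnion.mpr ⟨j, Finset.mem_univ _, hx⟩
  have habs : ∀ j, ∀ x ∈ S j, |x| ≤ (n:ℤ) := by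
    intro j x hx
    have := hsub j hx
    simp only [angleB, Finset.mem_Icc] at this
    rw [abs_le]; exact this
  have hnot1 : ∀ j, ((n:ℤ)+1) ∉ S j := by
    intro j hj
    have := abs_le.1 (habs j _ hj); omega
  have hnot2 : ∀ j, (-((n:ℤ)+1)) ∉ S j := by
    intro j hj
    have := abs_le.1 (habs j _ hj); omega
  have hmemT : ∀ (t : Fin (2*k+1)) (x : ℤ), x ∈ T t ↔
      x ∈ S t ∨ (x = (n:ℤ)+1 ∧ t = i) ∨ (x = -((n:ℤ)+1) ∧ t = pairIdx k i) := by
    intro t x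
    constructor
    · intro hx
      rcases Finset.mem_union.1 hx with hx | hx
      · rcases Finset.mem_union.1 hx with hx | hx
        · exact Or.inl hx
        · split_ifs at hx with h'
          · exact Or.inr (Or.inl ⟨Finset.mem_singleton.1 hx, h'⟩)
          · exact absurd hx (Finset.notMem_empty x)
      · split_ifs at hx with h'
        · exact Or.inr (Or.inr ⟨Finset.mem_singleton.1 hx, h'⟩)
        · exact absurd hx (Finset.notMem_empty x)
    · rintro (hx | ⟨rfl, rfl⟩ | ⟨rfl, rfl⟩)
      · exact Finset.mem_union_left _ (Finset.mem_union_left _ hx)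
      · exact Finset.mem_union_left _ (Finset.mem_union_right _ (by simp))
      · exact Finset.mem_union_right _ (by simp)
  have hST : ∀ t, S t ⊆ T t := fun t x hx => (hmemT t x).2 (Or.inl hx)
  have hmBT : ∀ j, mB T j = mB S j := by
    intro j
    have hTj : T j = S j ∪ ((if j = i then ({((n:ℤ)+1)} : Finset ℤ) else ∅)
        ∪ (if j = pairIdx k i then ({-((n:ℤ)+1)} : Finset ℤ) else ∅)) := by
      show (S j ∪ (if j = i then ({((n:ℤ)+1)} : Finset ℤ) else ∅))
          ∪ (if j = pairIdx k i then ({-((n:ℤ)+1)} : Finset ℤ) else ∅) = _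
      rw [Finset.union_assoc]
    show WithTop.untopD 0 (((T j).image (fun x => |x|)).min) = _
    rw [hTj]
    refine mB_union_big (hne j) (habs j) ?_
    intro x hx
    rcases Finset.mem_union.1 hx with hx | hx
    · split_ifs at hx with h'
      · rw [Finset.mem_singleton] at hx; subst hx
        rw [abs_of_nonneg (by positivity)]
      · exact absurd hx (Finset.notMem_empty x)
    · split_ifs at hx with h'
      · rw [Finset.mem_singleton] at hx; subst hx
        rw [abs_neg, abs_of_nonneg (by positivity)]
      · exact absurd hx (Finset.notMem_empty x)
  constructor
  · refine ⟨⟨?_, ?_, ?_, ?_, ?_, ?_⟩, ?_, ?_⟩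
    · exact fun t => (hne t).mono (hST t)
    · intro a b hab
      rw [Finset.disjoint_left]
      intro x hxa hxb
      rcases (hmemT a x).1 hxa with h1 | ⟨rfl, rfl⟩ | ⟨rfl, rfl⟩
      · rcases (hmemT b x).1 hxb with h2 | ⟨rfl, rfl⟩ | ⟨rfl, rfl⟩
        · exact Finset.disjoint_left.1 (hdisj a b hab) h1 h2
        · exact hnot1 a h1
        · exact hnot2 a h1
      · rcases (hmemT b _).1 hxb with h2 | ⟨-, rfl⟩ | ⟨h2, -⟩
        · exact hnot1 b h2
        · exact hab rfl
        · omega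
      · rcases (hmemT b _).1 hxb with h2 | ⟨h2, -⟩ | ⟨-, rfl⟩
        · exact hnot2 b h2
        · omega
        · exact hab rfl
    · ext x
      constructor
      · intro hx
        obtain ⟨t, -, hx⟩ := Finset.mem_biUnion.1 hx
        rcases (hmemT t x).1 hx with h1 | ⟨rfl, -⟩ | ⟨rfl, -⟩
        · have := hsub t h1
          simp only [angleB, Finset.mem_Icc] at this ⊢
          push_cast; omega
        · simp only [angleB, Finset.mem_Icc]; push_cast; omega
        · simp only [angleB, Finset.mem_Icc]; push_cast; omega
      · intro hx
        simp only [angleB, Finset.mem_Icc] at hx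
        push_cast at hx
        refine Finset.mem_biUnion.2 ?_
        by_cases h1 : x = (n:ℤ)+1
        · exact ⟨i, Finset.mem_univ _, (hmemT i x).2 (Or.inr (Or.inl ⟨h1, rfl⟩))⟩
        by_cases h2 : x = -((n:ℤ)+1)
        · exact ⟨pairIdx k i, Finset.mem_univ _,
            (hmemT _ x).2 (Or.inr (Or.inr ⟨h2, rfl⟩))⟩
        have : x ∈ angleB n := by
          simp only [angleB, Finset.mem_Icc]; omega
        rw [← hcov] at this
        obtain ⟨t, -, ht⟩ := Finset.mem_biUnion.1 this
        exact ⟨t, Finset.mem_univ _, hST t ht⟩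
    · exact hST 0 h0
    · intro x hx
      rcases (hmemT 0 x).1 hx with h1 | ⟨rfl, h1⟩ | ⟨rfl, h1⟩
      · exact hST 0 (hneg x h1)
      · refine (hmemT 0 _).2 (Or.inr (Or.inr ⟨rfl, ?_⟩))
        rw [← h1]
        simp [pairIdx]
      · have hi0 : i = 0 := by
          by_contra hne0
          have hv : i.val ≠ 0 := fun hv => hne0 (Fin.ext hv)
          have := stmt18_pair_val_ne_zero i hv
          rw [← h1] at this
          simp at this
        refine (hmemT 0 _).2 (Or.inr (Or.inl ⟨by ring, ?_⟩))
        rw [hi0]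
    · intro ℓ hℓ h
      have hB : (2*ℓ-1 : ℕ) < 2*k+1 := by omega
      have himg : ∀ (A : Finset ℤ) (x : ℤ), x ∈ A.image (fun y => -y) ↔ -x ∈ A := by
        intro A x
        simp only [Finset.mem_image]
        constructor
        · rintro ⟨y, hy, rfl⟩; simpa using hy
        · intro h; exact ⟨-x, h, neg_neg x⟩
      ext x
      rw [himg, hmemT, hmemT]
      have hs : x ∈ S ⟨2*ℓ, h⟩ ↔ -x ∈ S ⟨2*ℓ-1, hB⟩ := by
        rw [hpair ℓ hℓ h, himg]
      constructor
      · rintro (h1 | ⟨rfl, h1⟩ | ⟨rfl, h1⟩)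
        · exact Or.inl (hs.1 h1)
        · exact Or.inr (Or.inr ⟨rfl, ((stmt18_pair_odd i ℓ hℓ h).2 h1.symm).symm⟩)
        · exact Or.inr (Or.inl ⟨by ring, ((stmt18_pair_even i ℓ hℓ h).1 h1.symm).symm⟩)
      · rintro (h1 | ⟨h1, h2⟩ | ⟨h1, h2⟩)
        · exact Or.inl (hs.2 h1)
        · exact Or.inr (Or.inr ⟨by omega, ((stmt18_pair_even i ℓ hℓ h).2 h2.symm).symm⟩)
        · exact Or.inr (Or.inl ⟨by omega, ((stmt18_pair_odd i ℓ hℓ h).1 h2.symm).symm⟩)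
    · intro ℓ hℓ h
      rw [hmBT]
      exact hST _ (hmem2 ℓ hℓ h)
    · intro ℓ h
      rw [hmBT, hmBT]
      exact hmono ℓ h
  · have hmset : {p : ℤ × Fin (2*k+1) | (∃ i', p.2 < i' ∧ p.1 ∈ T i') ∧ mB T p.2 ≤ p.1}
        = {p : ℤ × Fin (2*k+1) | (∃ i', p.2 < i' ∧ p.1 ∈ S i') ∧ mB S p.2 ≤ p.1}
          ∪ (fun j => (((n:ℤ)+1), j)) '' {j | j < i} := by
      ext ⟨x, j⟩
      simp only [Set.mem_setOf_eq, Set.mem_union, Set.mem_image, hmBT]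
      constructor
      · rintro ⟨⟨i', hji', hx⟩, hm⟩
        rcases (hmemT i' x).1 hx with h1 | ⟨rfl, rfl⟩ | ⟨rfl, rfl⟩
        · exact Or.inl ⟨⟨i', hji', h1⟩, hm⟩
        · exact Or.inr ⟨j, hji', rfl⟩
        · have := (mB_bounds (hne j) (habs j)).1
          omega
      · rintro (⟨⟨i', hji', hx⟩, hm⟩ | ⟨j', hj', hje⟩)
        · exact ⟨⟨i', hji', hST i' hx⟩, hm⟩
        · obtain ⟨rfl, rfl⟩ : ((n:ℤ)+1) = x ∧ j' = j := by
            constructor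
            · exact congrArg Prod.fst hje
            · exact congrArg Prod.snd hje
          refine ⟨⟨i, hj', (hmemT i _).2 (Or.inr (Or.inl ⟨rfl, rfl⟩))⟩, ?_⟩
          have := (mB_bounds (hne j') (habs j')).2
          omega
    have hfinS : ({p : ℤ × Fin (2*k+1) | (∃ i', p.2 < i' ∧ p.1 ∈ S i') ∧ mB S p.2 ≤ p.1}).Finite := by
      apply Set.Finite.subset (((angleB n : Finset ℤ).finite_toSet).prod (Set.finite_univ (α := Fin (2*k+1))))
      rintro ⟨x, j⟩ ⟨⟨i', -, hx⟩, -⟩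
      exact ⟨hsub i' hx, trivial⟩
    have hfinI : ((fun j => (((n:ℤ)+1), j)) '' {j : Fin (2*k+1) | j < i}).Finite :=
      Set.Finite.image _ (Set.toFinite _)
    have hdisjset : Disjoint {p : ℤ × Fin (2*k+1) | (∃ i', p.2 < i' ∧ p.1 ∈ S i') ∧ mB S p.2 ≤ p.1}
        ((fun j => (((n:ℤ)+1), j)) '' {j : Fin (2*k+1) | j < i}) := by
      rw [Set.disjoint_left]
      rintro ⟨x, j⟩ ⟨⟨i', -, hx⟩, -⟩ ⟨j', -, hje⟩
      have : ((n:ℤ)+1) = x := congrArg Prod.fst hje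
      exact hnot1 i' (this ▸ hx)
    have hinj : Function.Injective (fun j : Fin (2*k+1) => (((n:ℤ)+1), j)) := by
      intro a b hab
      simpa using congrArg Prod.snd hab
    show losB' T = losB' S + i.val
    unfold losB'
    rw [hmset, Set.ncard_union_eq hdisjset hfinS hfinI,
      Set.ncard_image_of_injective _ hinj]
    congr 1
    have : {j : Fin (2*k+1) | j < i} = ↑(Finset.Iio i) := by ext j; simp
    rw [this, Set.ncard_coe_finset, Fin.card_Iio]
end
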